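/- One-sided limits of the terminal values of backward shocks (Lemma 3.1, equation (3.15)): Let f, θ, T be as in the context and fix B > θ. Let Y : (0, T·f'(B)) → ℝ be a function such that for each R ∈ (0, T·f'(B)), Y(R) = y_R(T) for some solution y_R of the left backward-shock Cauchy problem with data (R,B); and let X : (T·f'(B̄), 0) → ℝ be a function such that for each L ∈ (T·f'(B̄), 0), X(L) = x_L(T) for some solution x_L of the right backward-shock Cauchy problem with data (L, B̄) (whose ODE reads x'(t) = λ((f')⁻¹((x(t)+L)/t), B), since Ā = B when A = B̄). Then: Y(R) → T·f'(B̄) as R → 0⁺; Y(R) → 0 as R → T·f'(B)⁻; X(L) → T·f'(B) as L → 0⁻; and X(L) → 0 as L → T·f'(B̄)⁺. -/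

import Mathlib

noncomputable section

open Set Filter

/-- The Rankine–Hugoniot speed `λ(u,v) = (f(v) - f(u)) / (v - u)`. -/
def lamF (f : ℝ → ℝ) (u v : ℝ) : ℝ := (f v - f u) / (v - u)

/-- `y` solves the left backward-shock Cauchy problem with data `(R, B)` on
`[R / f'(B), T]`:  `y(R/f'(B)) = 0` and `y'(t) = λ((f')⁻¹((y(t)+R)/t), B̄)`.
Here `finv` denotes the inverse of `deriv f`. -/
def LeftShockSol (f finv : ℝ → ℝ) (T B Bbar R : ℝ) (y : ℝ → ℝ) : Prop :=
  y (R / deriv f B) = 0 ∧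
  ∀ t ∈ Icc (R / deriv f B) T,
    HasDerivWithinAt y (lamF f (finv ((y t + R) / t)) Bbar) (Icc (R / deriv f B) T) t

/-- `x` solves the right backward-shock Cauchy problem with data `(L, A)` on
`[L / f'(A), T]`:  `x(L/f'(A)) = 0` and `x'(t) = λ((f')⁻¹((x(t)+L)/t), Ā)`.
Here `finv` denotes the inverse of `deriv f`. -/
def RightShockSol (f finv : ℝ → ℝ) (T A Abar L : ℝ) (x : ℝ → ℝ) : Prop :=
  x (L / deriv f A) = 0 ∧
  ∀ t ∈ Icc (L / deriv f A) T,
    HasDerivWithinAt x (lamF f (finv ((x t + L) / t)) Abar) (Icc (L / deriv f A) T) t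

section Helpers
variable {f : ℝ → ℝ} {a : ℝ}

lemma my_diff (hf : ContDiff ℝ 2 f) : Differentiable ℝ f :=
  hf.differentiable (by norm_num)

lemma my_diff1 (hf : ContDiff ℝ 2 f) : Differentiable ℝ (deriv f) := by
  have h2 : ContDiff ℝ ((1:ℕ∞) + 1) f := by norm_num; exact_mod_cast hf
  exact (((contDiff_succ_iff_deriv (n := 1)).mp (by rw [one_add_one_eq_two]; exact hf)).2.2).differentiable one_ne_zero

lemma sc_deriv (ha : 0 < a) (hf : ContDiff ℝ 2 f) (hf2 : ∀ u : ℝ, a ≤ deriv (deriv f) u) :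
    ∀ u v : ℝ, u ≤ v → a * (v - u) ≤ deriv f v - deriv f u := by
  have hd1 := my_diff1 hf
  have hder : ∀ x : ℝ, HasDerivAt (fun u => deriv f u - a * u) (deriv (deriv f) x - a) x := by
    intro x
    have h1 : HasDerivAt (fun u : ℝ => a * u) a x := by simpa using (hasDerivAt_id x).const_mul a
    exact (hd1 x).hasDerivAt.sub h1
  have hmon : Monotone (fun u => deriv f u - a * u) := by
    apply monotone_of_deriv_nonneg (fun x => (hder x).differentiableAt)
    intro x
    rw [(hder x).deriv]
    linarith [hf2 x]
  intro u v huv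
  have := hmon huv
  simp only at this
  linarith

lemma sc_strictMono (ha : 0 < a) (hf2 : ∀ u : ℝ, a ≤ deriv (deriv f) u) :
    StrictMono (deriv f) :=
  strictMono_of_deriv_pos fun x => lt_of_lt_of_le ha (hf2 x)

lemma quad_hasDerivAt (p q u x : ℝ) :
    HasDerivAt (fun v => p * v + q * (v - u) ^ 2) (p + q * (2 * (x - u))) x := by
  have h1 : HasDerivAt (fun v : ℝ => p * v) p x := by
    simpa using (hasDerivAt_id x).const_mul p
  have h2 : HasDerivAt (fun v : ℝ => (v - u) ^ 2) (2 * (x - u)) x := by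
    have := ((hasDerivAt_id x).sub_const u).pow 2
    simpa [Pi.pow_def] using this
  simpa [mul_comm, Pi.add_def] using h1.add (h2.const_mul q)

lemma sc_taylor (ha : 0 < a) (hf : ContDiff ℝ 2 f) (hf2 : ∀ u : ℝ, a ≤ deriv (deriv f) u) :
    ∀ u v : ℝ, f u + deriv f u * (v - u) + a / 2 * (v - u) ^ 2 ≤ f v := by
  have hd := my_diff hf
  intro u v
  set φ : ℝ → ℝ := fun v => f v - (deriv f u * v + a / 2 * (v - u) ^ 2) with hφ
  have hder : ∀ x : ℝ, HasDerivAt φ (deriv f x - (deriv f u + a / 2 * (2 * (x - u)))) x := by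
    intro x
    exact (hd x).hasDerivAt.sub (quad_hasDerivAt _ _ _ _)
  have hdiff : Differentiable ℝ φ := fun x => (hder x).differentiableAt
  have key : φ u ≤ φ v := by
    rcases le_total u v with huv | huv
    · have hmono : MonotoneOn φ (Ici u) := by
        apply monotoneOn_of_deriv_nonneg (convex_Ici u) hdiff.continuous.continuousOn
          (hdiff.differentiableOn)
        intro x hx
        rw [interior_Ici] at hx
        rw [(hder x).deriv]
        have := sc_deriv ha hf hf2 u x (le_of_lt hx)
        nlinarith
      exact hmono self_mem_Ici huv huv
    · have hmono : AntitoneOn φ (Iic u) := by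
        apply antitoneOn_of_deriv_nonpos (convex_Iic u) hdiff.continuous.continuousOn
          (hdiff.differentiableOn)
        intro x hx
        rw [interior_Iic] at hx
        rw [(hder x).deriv]
        have := sc_deriv ha hf hf2 x u (le_of_lt hx)
        nlinarith
      exact hmono huv self_mem_Iic huv
  simp only [hφ] at key
  nlinarith

lemma compact_bounds (ha : 0 < a) (hf : ContDiff ℝ 2 f) (hf2 : ∀ u : ℝ, a ≤ deriv (deriv f) u)
    (lo hi : ℝ) (hle : lo ≤ hi) :
    ∃ M : ℝ, 0 < M ∧ a ≤ M ∧
      (∀ u ∈ Icc lo hi, ∀ v ∈ Icc lo hi, u ≤ v → deriv f v - deriv f u ≤ M * (v - u)) ∧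
      (∀ u ∈ Icc lo hi, ∀ v ∈ Icc lo hi,
        f v ≤ f u + deriv f u * (v - u) + M / 2 * (v - u) ^ 2) := by
  have hd := my_diff hf
  have hd1 := my_diff1 hf
  have h2 : ContDiff ℝ ((1:ℕ∞) + 1) f := by exact_mod_cast hf
  have hcont2 : Continuous (deriv (deriv f)) :=
    ((contDiff_succ_iff_deriv.mp (by exact_mod_cast h2)).2.2).continuous_deriv le_rfl
  obtain ⟨z0, hz0, hz0max⟩ := isCompact_Icc.exists_isMaxOn (s := Icc lo hi)
    ⟨lo, left_mem_Icc.mpr hle⟩ (hcont2.continuousOn)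
  set M : ℝ := max (deriv (deriv f) z0) a with hM
  have hMa : a ≤ M := le_max_right _ _
  have hMpos : 0 < M := lt_of_lt_of_le ha hMa
  have hMbd : ∀ z ∈ Icc lo hi, deriv (deriv f) z ≤ M := fun z hz =>
    le_trans (hz0max hz) (le_max_left _ _)
  have lip : ∀ u ∈ Icc lo hi, ∀ v ∈ Icc lo hi, u ≤ v → deriv f v - deriv f u ≤ M * (v - u) := by
    intro u hu v hv huv
    rcases eq_or_lt_of_le huv with rfl | huv'
    · simp
    · obtain ⟨ξ, hξ, hξeq⟩ := exists_hasDerivAt_eq_slope (deriv f) (deriv (deriv f)) huv'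
        hd1.continuous.continuousOn (fun x _ => (hd1 x).hasDerivAt)
      have hξmem : ξ ∈ Icc lo hi := ⟨le_trans hu.1 (le_of_lt hξ.1), le_trans (le_of_lt hξ.2) hv.2⟩
      have h := hMbd ξ hξmem
      rw [hξeq] at h
      rw [div_le_iff₀ (by linarith)] at h
      linarith [h]
  refine ⟨M, hMpos, hMa, lip, ?_⟩
  intro u hu v hv
  set χ : ℝ → ℝ := fun v => (deriv f u * v + M / 2 * (v - u) ^ 2) - f v with hχ
  have hder : ∀ x : ℝ, HasDerivAt χ ((deriv f u + M / 2 * (2 * (x - u))) - deriv f x) x :=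
    fun x => (quad_hasDerivAt _ _ _ _).sub (hd x).hasDerivAt
  have hdiff : Differentiable ℝ χ := fun x => (hder x).differentiableAt
  have key : χ u ≤ χ v := by
    rcases le_total u v with huv | huv
    · have hmono : MonotoneOn χ (Icc u hi) := by
        apply monotoneOn_of_deriv_nonneg (convex_Icc u hi) hdiff.continuous.continuousOn
          (hdiff.differentiableOn)
        intro x hx
        rw [interior_Icc] at hx
        rw [(hder x).deriv]
        have hxmem : x ∈ Icc lo hi := ⟨le_trans hu.1 (le_of_lt hx.1), le_of_lt hx.2⟩
        have := lip u hu x hxmem (le_of_lt hx.1)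
        nlinarith
      exact hmono (left_mem_Icc.mpr (le_trans huv hv.2)) ⟨huv, hv.2⟩ huv
    · have hmono : AntitoneOn χ (Icc lo u) := by
        apply antitoneOn_of_deriv_nonpos (convex_Icc lo u) hdiff.continuous.continuousOn
          (hdiff.differentiableOn)
        intro x hx
        rw [interior_Icc] at hx
        rw [(hder x).deriv]
        have hxmem : x ∈ Icc lo hi := ⟨le_of_lt hx.1, le_trans (le_of_lt hx.2) hu.2⟩
        have := lip x hxmem u hu (le_of_lt hx.2)
        nlinarith
      exact hmono ⟨hv.1, huv⟩ (right_mem_Icc.mpr (le_trans hv.1 huv)) huv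
  simp only [hχ] at key
  nlinarith

lemma Bbar_lt_theta (ha : 0 < a) (hf : ContDiff ℝ 2 f)
    (hf2 : ∀ u : ℝ, a ≤ deriv (deriv f) u)
    {θ B Bbar : ℝ} (hθ : deriv f θ = 0) (hB : θ < B) (hBbar1 : Bbar ≤ θ)
    (hBbar2 : f Bbar = f B) : Bbar < θ := by
  rcases eq_or_lt_of_le hBbar1 with rfl | h
  · exfalso
    have htay := sc_taylor ha hf hf2 Bbar B
    rw [hθ] at htay
    nlinarith [pow_pos (sub_pos.mpr hB) 2]
  · exact h

end Helpers

set_option maxHeartbeats 2000000 in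
lemma left_bounds
    (f : ℝ → ℝ) (a : ℝ) (ha : 0 < a) (hf : ContDiff ℝ 2 f)
    (hf2 : ∀ u : ℝ, a ≤ deriv (deriv f) u)
    (θ : ℝ) (hθ : deriv f θ = 0)
    (finv : ℝ → ℝ) (hfinv2 : ∀ p : ℝ, deriv f (finv p) = p)
    (T : ℝ) (hT : 0 < T)
    (B Bbar : ℝ) (hB : θ < B) (hBbar1 : Bbar ≤ θ) (hBbar2 : f Bbar = f B) :
    ∃ c : ℝ, 0 < c ∧ ∀ R ∈ Ioo (0:ℝ) (T * deriv f B), ∀ y : ℝ → ℝ,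
      LeftShockSol f finv T B Bbar R y →
      deriv f Bbar * (T - R / deriv f B) ≤ y T ∧ y T ≤ 0 ∧
      T * deriv f Bbar - R ≤ y T ∧
      y T ≤ T * deriv f Bbar - R + T * (deriv f B - deriv f Bbar) *
        Real.exp (c * (Real.log (R / deriv f B) - Real.log T)) := by
  have hmono := sc_strictMono ha hf2
  have hBbarθ : Bbar < θ := Bbar_lt_theta ha hf hf2 hθ hB hBbar1 hBbar2
  have hp1 : 0 < deriv f B := by have := hmono hB; rw [hθ] at this; exact this
  have hp0 : deriv f Bbar < 0 := by have := hmono hBbarθ; rw [hθ] at this; exact this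
  have hp01 : deriv f Bbar < deriv f B := hmono (lt_trans hBbarθ hB)
  have hBbarB : Bbar < B := lt_trans hBbarθ hB
  obtain ⟨M, hMpos, hMa, hMlip, hMtay⟩ := compact_bounds ha hf hf2 Bbar B hBbarB.le
  refine ⟨a / (2 * M), by positivity, ?_⟩
  intro R hR y hy
  obtain ⟨hy0, hy'⟩ := hy
  set t0 : ℝ := R / deriv f B with ht0def
  have hR0 : 0 < R := hR.1
  have hRT : R < T * deriv f B := hR.2
  have ht0pos : 0 < t0 := div_pos hR0 hp1
  have ht0T : t0 < T := (div_lt_iff₀ hp1).mpr hRT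
  set I : Set ℝ := Icc t0 T with hIdef
  have hTI : T ∈ I := right_mem_Icc.mpr ht0T.le
  set g : ℝ → ℝ := fun t => (y t + R) / t with hgdef
  have hIt : ∀ t ∈ I, 0 < t := fun t ht => lt_of_lt_of_le ht0pos ht.1
  have hycont : ContinuousOn y I := fun t ht => (hy' t ht).continuousWithinAt
  have hgcont : ContinuousOn g I :=
    (hycont.add continuousOn_const).div continuousOn_id (fun t ht => ne_of_gt (hIt t ht))
  have hgt0 : g t0 = deriv f B := by
    simp only [hgdef]
    rw [hy0, zero_add, ht0def]
    field_simp
  have hyg : ∀ t ∈ I, HasDerivWithinAt y (lamF f (finv (g t)) Bbar) I t := fun t ht => hy' t ht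
  have hgderiv : ∀ t ∈ I, HasDerivWithinAt g ((lamF f (finv (g t)) Bbar - g t) / t) I t := by
    intro t ht
    have htpos := hIt t ht
    have h1 := ((hyg t ht).add_const R).div (hasDerivWithinAt_id t I) (ne_of_gt htpos)
    have h2 : ∀ lam : ℝ, (lam - g t) / t
        = (lam * id t - (y t + R) * 1) / id t ^ 2 := by
      intro lam
      have hgt : g t = (y t + R) / t := rfl
      simp only [id_eq, mul_one]
      rw [hgt]
      have htne : t ≠ 0 := ne_of_gt htpos
      field_simp
      all_goals first
        | exact Or.inl trivial
        | exact Or.inl (pow_two t)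
    rw [h2 _]
    exact h1
  have hgderiv' : ∀ τ ∈ Ioo t0 T, HasDerivAt g ((lamF f (finv (g τ)) Bbar - g τ) / τ) τ :=
    fun τ hτ => (hgderiv τ (Ioo_subset_Icc_self hτ)).hasDerivAt (Icc_mem_nhds hτ.1 hτ.2)
  have hyderiv' : ∀ τ ∈ Ioo t0 T, HasDerivAt y (lamF f (finv (g τ)) Bbar) τ :=
    fun τ hτ => (hyg τ (Ioo_subset_Icc_self hτ)).hasDerivAt (Icc_mem_nhds hτ.1 hτ.2)
  have hfug : ∀ t : ℝ, deriv f (finv (g t)) = g t := fun t => hfinv2 _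
  -- upper invariance
  have hupper : ∀ t ∈ I, g t ≤ deriv f B := by
    by_contra hcon
    push_neg at hcon
    obtain ⟨t1, ht1, hgt1⟩ := hcon
    set S : Set ℝ := {t | t ∈ Icc t0 t1 ∧ g t ≤ deriv f B} with hSdef
    have hsub1 : Icc t0 t1 ⊆ I := Icc_subset_Icc le_rfl ht1.2
    have hSclosed : IsClosed S := by
      have hSeq : S = Icc t0 t1 ∩ g ⁻¹' (Iic (deriv f B)) := rfl
      rw [hSeq]
      exact (hgcont.mono hsub1).preimage_isClosed_of_isClosed isClosed_Icc isClosed_Iic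
    have hScpt : IsCompact S :=
      IsCompact.of_isClosed_subset isCompact_Icc hSclosed (fun t ht => ht.1)
    have hSne : S.Nonempty := ⟨t0, left_mem_Icc.mpr ht1.1, by rw [hgt0]⟩
    have hsS : sSup S ∈ S := hScpt.sSup_mem hSne
    set s : ℝ := sSup S with hsdef
    have hst1 : s < t1 := lt_of_le_of_ne hsS.1.2 (fun h => by rw [h] at hsS; linarith [hsS.2])
    have hafter : ∀ t ∈ Ioc s t1, deriv f B < g t := by
      intro t ht
      by_contra hle
      push_neg at hle
      have htS : t ∈ S := ⟨⟨le_trans hsS.1.1 (le_of_lt ht.1), ht.2⟩, hle⟩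
      have := le_csSup hScpt.bddAbove htS
      linarith [ht.1]
    have hanti : StrictAntiOn g (Icc s t1) := by
      apply strictAntiOn_of_deriv_neg (convex_Icc s t1)
        (hgcont.mono (Icc_subset_Icc hsS.1.1 ht1.2))
      intro τ hτ
      rw [interior_Icc] at hτ
      have hτI : τ ∈ Ioo t0 T := ⟨lt_of_le_of_lt hsS.1.1 hτ.1, lt_of_lt_of_le hτ.2 ht1.2⟩
      rw [(hgderiv' τ hτI).deriv]
      have hgτ : deriv f B < g τ := hafter τ ⟨hτ.1, le_of_lt hτ.2⟩
      set u : ℝ := finv (g τ) with hudef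
      have hfu : deriv f u = g τ := hfug τ
      have hub : Bbar < u := by
        apply hmono.lt_iff_lt.mp
        rw [hfu]; linarith
      have htay := sc_taylor ha hf hf2 u Bbar
      rw [hfu] at htay
      have hlam : lamF f u Bbar ≤ g τ + a / 2 * (Bbar - u) := by
        rw [lamF, div_le_iff_of_neg (by linarith : Bbar - u < 0)]
        nlinarith
      apply div_neg_of_neg_of_pos _ (lt_trans ht0pos hτI.1)
      nlinarith
    have := hanti (left_mem_Icc.mpr hst1.le) (right_mem_Icc.mpr hst1.le) hst1
    linarith [hsS.2]
  -- strict lower invariance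
  have hlower : ∀ t ∈ I, deriv f Bbar < g t := by
    by_contra hcon
    push_neg at hcon
    obtain ⟨t1, ht1, hgt1⟩ := hcon
    set S : Set ℝ := {t | t ∈ I ∧ g t ≤ deriv f Bbar} with hSdef
    have hSclosed : IsClosed S := by
      have hSeq : S = I ∩ g ⁻¹' (Iic (deriv f Bbar)) := rfl
      rw [hSeq]
      exact hgcont.preimage_isClosed_of_isClosed isClosed_Icc isClosed_Iic
    have hScpt : IsCompact S :=
      IsCompact.of_isClosed_subset isCompact_Icc hSclosed (fun t ht => ht.1)
    have hSne : S.Nonempty := ⟨t1, ht1, hgt1⟩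
    have hτ1S : sInf S ∈ S := hScpt.sInf_mem hSne
    set τ1 : ℝ := sInf S with hτ1def
    have ht0τ1 : t0 < τ1 := by
      rcases eq_or_lt_of_le hτ1S.1.1 with h | h
      · exfalso
        have h2 := hτ1S.2
        rw [← h, hgt0] at h2
        linarith
      · exact h
    have hbefore : ∀ t ∈ Ico t0 τ1, deriv f Bbar < g t := by
      intro t ht
      by_contra hle
      push_neg at hle
      have htS : t ∈ S := ⟨⟨ht.1, le_trans (le_of_lt ht.2) hτ1S.1.2⟩, hle⟩
      have := csInf_le hScpt.bddBelow htS
      linarith [ht.2]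
    set K : ℝ := M / (2 * a * t0) with hKdef
    have hKpos : 0 < K := by positivity
    set H : ℝ → ℝ := fun t => (g t - deriv f Bbar) * Real.exp (K * t) with hHdef
    have hHcont : ContinuousOn H (Icc t0 τ1) := by
      apply ContinuousOn.mul
      · exact (hgcont.mono (Icc_subset_Icc le_rfl hτ1S.1.2)).sub continuousOn_const
      · exact (Real.continuous_exp.comp (continuous_const.mul continuous_id)).continuousOn
    have hHderiv : ∀ τ ∈ Ioo t0 τ1, HasDerivAt H
        (((lamF f (finv (g τ)) Bbar - g τ) / τ) * Real.exp (K * τ) +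
          (g τ - deriv f Bbar) * (Real.exp (K * τ) * K)) τ := by
      intro τ hτ
      have hτI : τ ∈ Ioo t0 T := ⟨hτ.1, lt_of_lt_of_le hτ.2 hτ1S.1.2⟩
      have h1 : HasDerivAt (fun t : ℝ => K * t) K τ := by simpa using (hasDerivAt_id τ).const_mul K
      have hexp : HasDerivAt (fun t => Real.exp (K * t)) (Real.exp (K * τ) * K) τ :=
        (Real.hasDerivAt_exp (K * τ)).comp τ h1
      exact ((hgderiv' τ hτI).sub_const (deriv f Bbar)).mul hexp
    have hHmono : MonotoneOn H (Icc t0 τ1) := by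
      apply monotoneOn_of_deriv_nonneg (convex_Icc t0 τ1) hHcont
      · intro τ hτ
        rw [interior_Icc] at hτ
        exact (hHderiv τ hτ).differentiableAt.differentiableWithinAt
      · intro τ hτ
        rw [interior_Icc] at hτ
        rw [(hHderiv τ hτ).deriv]
        have hτI : τ ∈ I := ⟨hτ.1.le, le_trans hτ.2.le hτ1S.1.2⟩
        have hτpos : 0 < τ := lt_trans ht0pos hτ.1
        have hτt0 : t0 ≤ τ := hτ.1.le
        have hgτlow : deriv f Bbar < g τ := hbefore τ ⟨hτ.1.le, hτ.2⟩
        have hgτup : g τ ≤ deriv f B := hupper τ hτI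
        set u : ℝ := finv (g τ) with hudef
        have hfu : deriv f u = g τ := hfug τ
        have hub : Bbar < u := by
          apply hmono.lt_iff_lt.mp
          rw [hfu]; exact hgτlow
        have huB : u ≤ B := by
          apply hmono.le_iff_le.mp
          rw [hfu]; exact hgτup
        have humem : u ∈ Icc Bbar B := ⟨hub.le, huB⟩
        have htay := hMtay u humem Bbar (left_mem_Icc.mpr hBbarB.le)
        rw [hfu] at htay
        have hlam : g τ + M / 2 * (Bbar - u) ≤ lamF f u Bbar := by
          rw [lamF, le_div_iff_of_neg (by linarith : Bbar - u < 0)]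
          nlinarith
        have hslope : a * (u - Bbar) ≤ g τ - deriv f Bbar := by
          have := sc_deriv ha hf hf2 Bbar u hub.le
          rw [hfu] at this
          linarith
        have hkey : 0 ≤ (lamF f u Bbar - g τ) + (g τ - deriv f Bbar) * K * τ := by
          have h3 : -(M / (2 * a)) * (g τ - deriv f Bbar) ≤ lamF f u Bbar - g τ := by
            have hMa2 : 0 ≤ M / (2 * a) := by positivity
            have hh := mul_le_mul_of_nonneg_left hslope hMa2
            have hid : M / (2 * a) * (a * (u - Bbar)) = M / 2 * (u - Bbar) := by
              have hane : a ≠ 0 := ne_of_gt ha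
              field_simp
            rw [hid] at hh
            linarith [hlam]
          have h4 : (g τ - deriv f Bbar) * K * t0 ≤ (g τ - deriv f Bbar) * K * τ :=
            mul_le_mul_of_nonneg_left hτt0 (mul_nonneg (by linarith) hKpos.le)
          have h5 : (g τ - deriv f Bbar) * K * t0 = M / (2 * a) * (g τ - deriv f Bbar) := by
            have ht0ne : t0 ≠ 0 := ne_of_gt ht0pos
            have hane : a ≠ 0 := ne_of_gt ha
            rw [hKdef]
            field_simp
          linarith
        have hkey2 : 0 ≤ (lamF f u Bbar - g τ) / τ + (g τ - deriv f Bbar) * K := by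
          rw [div_add' _ _ _ (ne_of_gt hτpos)]
          apply div_nonneg _ hτpos.le
          linarith [hkey]
        nlinarith [mul_nonneg hkey2 (Real.exp_pos (K * τ)).le]
    have hend := hHmono (left_mem_Icc.mpr ht0τ1.le) (right_mem_Icc.mpr ht0τ1.le) ht0τ1.le
    have hHt0 : 0 < H t0 := by
      have : H t0 = (g t0 - deriv f Bbar) * Real.exp (K * t0) := rfl
      rw [this, hgt0]
      exact mul_pos (by linarith) (Real.exp_pos _)
    have hHτ1 : H τ1 ≤ 0 := by
      have : H τ1 = (g τ1 - deriv f Bbar) * Real.exp (K * τ1) := rfl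
      rw [this]
      exact mul_nonpos_of_nonpos_of_nonneg (by linarith [hτ1S.2]) (Real.exp_pos _).le
    linarith
  -- bounds on the shock speed along the solution
  have hlambd : ∀ t ∈ I, deriv f Bbar ≤ lamF f (finv (g t)) Bbar ∧ lamF f (finv (g t)) Bbar ≤ 0 := by
    intro t ht
    set u : ℝ := finv (g t) with hudef
    have hfu : deriv f u = g t := hfug t
    have hub : Bbar < u := by
      apply hmono.lt_iff_lt.mp
      rw [hfu]; exact hlower t ht
    have huB : u ≤ B := by
      apply hmono.le_iff_le.mp
      rw [hfu]; exact hupper t ht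
    constructor
    · have htay := sc_taylor ha hf hf2 Bbar u
      rw [lamF, le_div_iff_of_neg (by linarith : Bbar - u < 0)]
      nlinarith [sq_nonneg (u - Bbar)]
    · have hfuB : f u ≤ f Bbar := by
        rcases le_total 0 (deriv f u) with hs | hs
        · have htay := sc_taylor ha hf hf2 u B
          have h1 : 0 ≤ deriv f u * (B - u) := mul_nonneg hs (by linarith)
          have h2 : 0 ≤ a / 2 * (B - u) ^ 2 := by positivity
          rw [hBbar2]
          linarith
        · have htay := sc_taylor ha hf hf2 u Bbar
          have h1 : 0 ≤ deriv f u * (Bbar - u) := mul_nonneg_iff.mpr (Or.inr ⟨hs, by linarith⟩)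
          have h2 : 0 ≤ a / 2 * (Bbar - u) ^ 2 := by positivity
          linarith
      rw [lamF]
      exact div_nonpos_of_nonneg_of_nonpos (by linarith) (by linarith)
  -- terminal bound: y T ≤ 0
  have hyT0 : y T ≤ 0 := by
    have hanti : AntitoneOn y I := by
      apply antitoneOn_of_deriv_nonpos (convex_Icc t0 T) hycont
      · intro τ hτ
        rw [interior_Icc] at hτ
        exact (hyderiv' τ hτ).differentiableAt.differentiableWithinAt
      · intro τ hτ
        rw [interior_Icc] at hτ
        rw [(hyderiv' τ hτ).deriv]
        exact (hlambd τ (Ioo_subset_Icc_self hτ)).2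
    have := hanti (left_mem_Icc.mpr ht0T.le) hTI ht0T.le
    rw [hy0] at this
    exact this
  -- terminal bound: p0 * (T - t0) ≤ y T
  have hyTlow : deriv f Bbar * (T - t0) ≤ y T := by
    set Z : ℝ → ℝ := fun t => y t - deriv f Bbar * t with hZdef
    have hZderiv : ∀ τ ∈ Ioo t0 T,
        HasDerivAt Z (lamF f (finv (g τ)) Bbar - deriv f Bbar) τ := by
      intro τ hτ
      have h1 : HasDerivAt (fun t : ℝ => deriv f Bbar * t) (deriv f Bbar) τ := by
        simpa using (hasDerivAt_id τ).const_mul (deriv f Bbar)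
      exact (hyderiv' τ hτ).sub h1
    have hZcont : ContinuousOn Z I := hycont.sub (continuous_const.mul continuous_id).continuousOn
    have hmonoZ : MonotoneOn Z I := by
      apply monotoneOn_of_deriv_nonneg (convex_Icc t0 T) hZcont
      · intro τ hτ
        rw [interior_Icc] at hτ
        exact (hZderiv τ hτ).differentiableAt.differentiableWithinAt
      · intro τ hτ
        rw [interior_Icc] at hτ
        rw [(hZderiv τ hτ).deriv]
        have := (hlambd τ (Ioo_subset_Icc_self hτ)).1
        linarith
    have := hmonoZ (left_mem_Icc.mpr ht0T.le) hTI ht0T.le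
    have hZt0 : Z t0 = -(deriv f Bbar * t0) := by
      simp only [hZdef]
      rw [hy0]; ring
    have hZT : Z T = y T - deriv f Bbar * T := rfl
    rw [hZt0, hZT] at this
    linarith
  -- the Gronwall decay bound
  set c : ℝ := a / (2 * M) with hcdef
  have hcpos : 0 < c := by positivity
  set E : ℝ → ℝ := fun t => Real.exp (c * Real.log t) with hEdef
  have hEpos : ∀ t : ℝ, 0 < E t := fun t => Real.exp_pos _
  have hEcont : ContinuousOn E I := by
    apply Real.continuous_exp.comp_continuousOn
    exact continuousOn_const.mul (Real.continuousOn_log.mono (fun t ht => ne_of_gt (hIt t ht)))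
  have hEderiv : ∀ τ ∈ Ioo t0 T, HasDerivAt E (E τ * (c * τ⁻¹)) τ := by
    intro τ hτ
    have hτpos : 0 < τ := lt_trans ht0pos hτ.1
    have h1 : HasDerivAt (fun t : ℝ => c * Real.log t) (c * τ⁻¹) τ :=
      (Real.hasDerivAt_log (ne_of_gt hτpos)).const_mul c
    exact (Real.hasDerivAt_exp _).comp τ h1
  set G : ℝ → ℝ := fun t => (g t - deriv f Bbar) * E t with hGdef
  have hGcont : ContinuousOn G I := (hgcont.sub continuousOn_const).mul hEcont
  have hGanti : AntitoneOn G I := by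
    apply antitoneOn_of_deriv_nonpos (convex_Icc t0 T) hGcont
    · intro τ hτ
      rw [interior_Icc] at hτ
      exact (((hgderiv' τ hτ).sub_const _).mul (hEderiv τ hτ)).differentiableAt.differentiableWithinAt
    · intro τ hτ
      rw [interior_Icc] at hτ
      have hGd := ((hgderiv' τ hτ).sub_const (deriv f Bbar)).mul (hEderiv τ hτ)
      rw [show G = ((fun x => g x - deriv f Bbar) * E) from rfl, hGd.deriv]
      have hτI : τ ∈ I := Ioo_subset_Icc_self hτ
      have hτpos : 0 < τ := lt_trans ht0pos hτ.1
      have hgτlow : deriv f Bbar < g τ := hlower τ hτI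
      have hgτup : g τ ≤ deriv f B := hupper τ hτI
      set u : ℝ := finv (g τ) with hudef
      have hfu : deriv f u = g τ := hfug τ
      have hub : Bbar < u := by
        apply hmono.lt_iff_lt.mp
        rw [hfu]; exact hgτlow
      have huB : u ≤ B := by
        apply hmono.le_iff_le.mp
        rw [hfu]; exact hgτup
      have humem : u ∈ Icc Bbar B := ⟨hub.le, huB⟩
      -- λ - g τ ≤ -(a/2) (u - Bbar)
      have htay := sc_taylor ha hf hf2 u Bbar
      rw [hfu] at htay
      have hlam : lamF f u Bbar ≤ g τ + a / 2 * (Bbar - u) := by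
        rw [lamF, div_le_iff_of_neg (by linarith : Bbar - u < 0)]
        nlinarith
      -- c * (g τ - p0) ≤ (a/2) * (u - Bbar)
      have hlip := hMlip Bbar (left_mem_Icc.mpr hBbarB.le) u humem hub.le
      rw [hfu] at hlip
      have hcX : c * (g τ - deriv f Bbar) ≤ a / 2 * (u - Bbar) := by
        have h1 : c * (g τ - deriv f Bbar) ≤ c * (M * (u - Bbar)) :=
          mul_le_mul_of_nonneg_left (by linarith) hcpos.le
        have h2 : c * (M * (u - Bbar)) = a / 2 * (u - Bbar) := by
          rw [hcdef]
          have hMne : M ≠ 0 := ne_of_gt hMpos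
          field_simp
        linarith
      have hsum : lamF f u Bbar - g τ + c * (g τ - deriv f Bbar) ≤ 0 := by linarith
      have hEq : (lamF f u Bbar - g τ) / τ * E τ + (g τ - deriv f Bbar) * (E τ * (c * τ⁻¹))
          = E τ * ((lamF f u Bbar - g τ + c * (g τ - deriv f Bbar)) / τ) := by
        field_simp
      rw [hEq]
      apply mul_nonpos_of_nonneg_of_nonpos (hEpos τ).le
      exact div_nonpos_of_nonpos_of_nonneg hsum hτpos.le
  have hGineq := hGanti (left_mem_Icc.mpr ht0T.le) hTI ht0T.le
  have hGt0 : G t0 = (deriv f B - deriv f Bbar) * E t0 := by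
    have : G t0 = (g t0 - deriv f Bbar) * E t0 := rfl
    rw [this, hgt0]
  have hGT : G T = (g T - deriv f Bbar) * E T := rfl
  rw [hGt0, hGT] at hGineq
  have hETpos : 0 < E T := hEpos T
  have hdecay : g T - deriv f Bbar ≤ (deriv f B - deriv f Bbar) *
      Real.exp (c * (Real.log t0 - Real.log T)) := by
    have h1 : g T - deriv f Bbar ≤ (deriv f B - deriv f Bbar) * E t0 / E T := by
      rw [le_div_iff₀ hETpos]
      exact hGineq
    have h2 : (deriv f B - deriv f Bbar) * E t0 / E T
        = (deriv f B - deriv f Bbar) * Real.exp (c * (Real.log t0 - Real.log T)) := by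
      rw [mul_div_assoc]
      congr 1
      rw [hEdef]
      simp only
      rw [← Real.exp_sub]
      congr 1
      ring
    rw [h2] at h1
    exact h1
  -- convert to statements about y T
  have hgTval : y T = T * g T - R := by
    have : g T = (y T + R) / T := rfl
    rw [this]
    field_simp
    ring
  have hgTlow : deriv f Bbar < g T := hlower T hTI
  refine ⟨hyTlow, hyT0, ?_, ?_⟩
  · nlinarith
  · have h3 : T * (g T - deriv f Bbar) ≤ T * ((deriv f B - deriv f Bbar) *
        Real.exp (c * (Real.log t0 - Real.log T))) :=
      mul_le_mul_of_nonneg_left hdecay hT.le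
    nlinarith [h3]

set_option maxHeartbeats 1000000 in
/-- **Lemma 3.1, equation (3.15)**: one-sided limits of the terminal values of the
backward shocks. -/
theorem backward_shock_terminal_limits
    (f : ℝ → ℝ) (a : ℝ) (ha : 0 < a) (hf : ContDiff ℝ 2 f)
    (hf2 : ∀ u : ℝ, a ≤ deriv (deriv f) u)
    (θ : ℝ) (hθ : deriv f θ = 0)
    (finv : ℝ → ℝ) (hfinv1 : ∀ u : ℝ, finv (deriv f u) = u)
    (hfinv2 : ∀ p : ℝ, deriv f (finv p) = p)
    (T : ℝ) (hT : 0 < T)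
    (B Bbar : ℝ) (hB : θ < B) (hBbar1 : Bbar ≤ θ) (hBbar2 : f Bbar = f B)
    (Y X : ℝ → ℝ)
    (hY : ∀ R ∈ Ioo (0:ℝ) (T * deriv f B),
      ∃ y : ℝ → ℝ, LeftShockSol f finv T B Bbar R y ∧ Y R = y T)
    (hX : ∀ L ∈ Ioo (T * deriv f Bbar) (0:ℝ),
      ∃ x : ℝ → ℝ, RightShockSol f finv T Bbar B L x ∧ X L = x T) :
    Tendsto Y (nhdsWithin (0:ℝ) (Ioi 0)) (nhds (T * deriv f Bbar)) ∧
    Tendsto Y (nhdsWithin (T * deriv f B) (Iio (T * deriv f B))) (nhds 0) ∧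
    Tendsto X (nhdsWithin (0:ℝ) (Iio 0)) (nhds (T * deriv f B)) ∧
    Tendsto X (nhdsWithin (T * deriv f Bbar) (Ioi (T * deriv f Bbar))) (nhds 0) := by
  have hmono := sc_strictMono ha hf2
  have hBbarθ : Bbar < θ := Bbar_lt_theta ha hf hf2 hθ hB hBbar1 hBbar2
  have hp1 : 0 < deriv f B := by have := hmono hB; rw [hθ] at this; exact this
  have hp0 : deriv f Bbar < 0 := by have := hmono hBbarθ; rw [hθ] at this; exact this
  have hTp1 : 0 < T * deriv f B := mul_pos hT hp1
  have hTp0 : T * deriv f Bbar < 0 := mul_neg_of_pos_of_neg hT hp0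
  obtain ⟨c, hcpos, hYbnd⟩ := left_bounds f a ha hf hf2 θ hθ finv hfinv2 T hT B Bbar hB hBbar1 hBbar2
  have hYb : ∀ R ∈ Ioo (0:ℝ) (T * deriv f B),
      deriv f Bbar * (T - R / deriv f B) ≤ Y R ∧ Y R ≤ 0 ∧
      T * deriv f Bbar - R ≤ Y R ∧
      Y R ≤ T * deriv f Bbar - R + T * (deriv f B - deriv f Bbar) *
        Real.exp (c * (Real.log (R / deriv f B) - Real.log T)) := by
    intro R hR
    obtain ⟨y, hsol, hYR⟩ := hY R hR
    rw [hYR]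
    exact hYbnd R hR y hsol
  -- mirrored problem
  set fm : ℝ → ℝ := fun u => f (-u) with hfmdef
  set fim : ℝ → ℝ := fun p => -finv (-p) with hfimdef
  have hfm : ContDiff ℝ 2 fm := hf.comp contDiff_neg
  have hdm : ∀ x : ℝ, deriv fm x = -deriv f (-x) := fun x => deriv_comp_neg f x
  have hdm2 : ∀ u : ℝ, a ≤ deriv (deriv fm) u := by
    intro u
    have e1 : deriv fm = fun x => -deriv f (-x) := funext fun x => hdm x
    rw [e1]
    have e2 : deriv (fun x => -deriv f (-x)) u = -deriv (fun x => deriv f (-x)) u := deriv.neg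
    rw [e2, deriv_comp_neg (deriv f) u, neg_neg]
    exact hf2 _
  have hθm : deriv fm (-θ) = 0 := by rw [hdm, neg_neg, hθ, neg_zero]
  have hfim2 : ∀ p : ℝ, deriv fm (fim p) = p := by
    intro p
    have : fim p = -finv (-p) := rfl
    rw [this, hdm, neg_neg, hfinv2, neg_neg]
  have hBm : -θ < -Bbar := neg_lt_neg hBbarθ
  have hBbar1m : -B ≤ -θ := neg_le_neg hB.le
  have hBbar2m : fm (-B) = fm (-Bbar) := by
    have e1 : fm (-B) = f B := by rw [hfmdef]; simp
    have e2 : fm (-Bbar) = f Bbar := by rw [hfmdef]; simp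
    rw [e1, e2, hBbar2]
  obtain ⟨c2, hc2pos, hXbnd⟩ := left_bounds fm a ha hfm hdm2 (-θ) hθm fim hfim2 T hT
    (-Bbar) (-B) hBm hBbar1m hBbar2m
  have hdmBbar : deriv fm (-Bbar) = -deriv f Bbar := by rw [hdm, neg_neg]
  have hdmB : deriv fm (-B) = -deriv f B := by rw [hdm, neg_neg]
  have hXb : ∀ L ∈ Ioo (T * deriv f Bbar) (0:ℝ),
      0 ≤ X L ∧ X L ≤ deriv f B * (T - L / deriv f Bbar) ∧
      X L ≤ T * deriv f B - L ∧
      T * deriv f B - L - T * (deriv f B - deriv f Bbar) *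
        Real.exp (c2 * (Real.log (L / deriv f Bbar) - Real.log T)) ≤ X L := by
    intro L hL
    obtain ⟨x, hxsol, hXL⟩ := hX L hL
    obtain ⟨hx0, hx'⟩ := hxsol
    have e : -L / deriv fm (-Bbar) = L / deriv f Bbar := by rw [hdmBbar, neg_div_neg_eq]
    have hsolm : LeftShockSol fm fim T (-Bbar) (-B) (-L) (fun t => -(x t)) := by
      constructor
      · rw [e]
        show -(x (L / deriv f Bbar)) = 0
        rw [hx0, neg_zero]
      · intro t ht
        rw [e] at ht ⊢
        have h1 := (hx' t ht).neg
        have e2 : lamF fm (fim ((-(x t) + -L) / t)) (-B) = -(lamF f (finv ((x t + L) / t)) B) := by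
          have e3 : (-(x t) + -L) / t = -((x t + L) / t) := by ring
          have e4 : fim (-((x t + L) / t)) = -finv ((x t + L) / t) := by
            have : fim (-((x t + L) / t)) = -finv (-(-((x t + L) / t))) := rfl
            rw [this, neg_neg]
          rw [e3, e4]
          have e5 : fm (-B) = f B := by rw [hfmdef]; simp
          have e6 : fm (-finv ((x t + L) / t)) = f (finv ((x t + L) / t)) := by
            rw [hfmdef]; simp
          rw [lamF, lamF, e5, e6]
          rw [show -B - -finv ((x t + L) / t) = -(B - finv ((x t + L) / t)) by ring, div_neg]
        rw [e2]
        exact h1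
    have hmem : -L ∈ Ioo (0:ℝ) (T * deriv fm (-Bbar)) := by
      rw [hdmBbar, mul_neg]
      exact ⟨by linarith [hL.2], by linarith [hL.1]⟩
    have hb := hXbnd (-L) hmem _ hsolm
    rw [hdmB, hdmBbar, neg_div_neg_eq] at hb
    obtain ⟨b1, b2, b3, b4⟩ := hb
    rw [hXL]
    refine ⟨by linarith, by nlinarith [b1], by linarith [b3], by nlinarith [b4]⟩
  -- exponential decay helper
  have key : ∀ (cc : ℝ), 0 < cc → ∀ (h : ℝ → ℝ) (F : Filter ℝ),
      Tendsto h F (nhdsWithin (0:ℝ) (Ioi 0)) →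
      Tendsto (fun z => Real.exp (cc * (Real.log (h z) - Real.log T))) F (nhds 0) := by
    intro cc hcc h F hh
    have l1 : Tendsto (fun z => Real.log (h z)) F atBot :=
      Real.tendsto_log_nhdsGT_zero.comp hh
    have l2 : Tendsto (fun z => Real.log (h z) - Real.log T) F atBot := by
      simpa [sub_eq_add_neg] using tendsto_atBot_add_const_right F (-Real.log T) l1
    have l3 : Tendsto (fun z => cc * (Real.log (h z) - Real.log T)) F atBot :=
      l2.const_mul_atBot hcc
    exact Real.tendsto_exp_atBot.comp l3
  refine ⟨?_, ?_, ?_, ?_⟩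
  · -- Y at 0+
    have hdiv : Tendsto (fun R : ℝ => R / deriv f B) (nhdsWithin 0 (Ioi 0))
        (nhdsWithin 0 (Ioi 0)) := by
      apply tendsto_nhdsWithin_of_tendsto_nhds_of_eventually_within
      · have h1 : Tendsto (fun R : ℝ => R / deriv f B) (nhds 0) (nhds (0 / deriv f B)) :=
          (continuous_id.div_const _).tendsto 0
        rw [zero_div] at h1
        exact h1.mono_left nhdsWithin_le_nhds
      · filter_upwards [self_mem_nhdsWithin] with R hR
        exact div_pos hR hp1
    have hexp := key c hcpos _ _ hdiv
    have hlow : Tendsto (fun R : ℝ => T * deriv f Bbar - R) (nhdsWithin 0 (Ioi 0))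
        (nhds (T * deriv f Bbar)) := by
      have h1 : Tendsto (fun R : ℝ => T * deriv f Bbar - R) (nhds 0)
          (nhds (T * deriv f Bbar - 0)) := (continuous_const.sub continuous_id).tendsto 0
      rw [sub_zero] at h1
      exact h1.mono_left nhdsWithin_le_nhds
    have hhigh : Tendsto (fun R : ℝ => T * deriv f Bbar - R + T * (deriv f B - deriv f Bbar) *
        Real.exp (c * (Real.log (R / deriv f B) - Real.log T))) (nhdsWithin 0 (Ioi 0))
        (nhds (T * deriv f Bbar)) := by
      have h2 := hexp.const_mul (T * (deriv f B - deriv f Bbar))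
      rw [mul_zero] at h2
      have := hlow.add h2
      rw [add_zero] at this
      exact this
    apply tendsto_of_tendsto_of_tendsto_of_le_of_le' hlow hhigh
    · filter_upwards [Ioo_mem_nhdsGT hTp1] with R hR
      exact (hYb R hR).2.2.1
    · filter_upwards [Ioo_mem_nhdsGT hTp1] with R hR
      exact (hYb R hR).2.2.2
  · -- Y at (T p1)-
    have hlow : Tendsto (fun R : ℝ => deriv f Bbar * (T - R / deriv f B))
        (nhdsWithin (T * deriv f B) (Iio (T * deriv f B))) (nhds 0) := by
      have h1 : Tendsto (fun R : ℝ => deriv f Bbar * (T - R / deriv f B)) (nhds (T * deriv f B))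
          (nhds (deriv f Bbar * (T - T * deriv f B / deriv f B))) :=
        (continuous_const.mul (continuous_const.sub (continuous_id.div_const _))).tendsto _
      rw [mul_div_assoc, div_self (ne_of_gt hp1), mul_one, sub_self, mul_zero] at h1
      exact h1.mono_left nhdsWithin_le_nhds
    apply tendsto_of_tendsto_of_tendsto_of_le_of_le' hlow tendsto_const_nhds
    · filter_upwards [Ioo_mem_nhdsLT_of_mem (⟨hTp1, le_refl _⟩ : T * deriv f B ∈ Ioc 0 (T * deriv f B))] with R hR
      exact (hYb R hR).1
    · filter_upwards [Ioo_mem_nhdsLT_of_mem (⟨hTp1, le_refl _⟩ : T * deriv f B ∈ Ioc 0 (T * deriv f B))] with R hR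
      exact (hYb R hR).2.1
  · -- X at 0-
    have hdiv : Tendsto (fun L : ℝ => L / deriv f Bbar) (nhdsWithin 0 (Iio 0))
        (nhdsWithin 0 (Ioi 0)) := by
      apply tendsto_nhdsWithin_of_tendsto_nhds_of_eventually_within
      · have h1 : Tendsto (fun L : ℝ => L / deriv f Bbar) (nhds 0) (nhds (0 / deriv f Bbar)) :=
          (continuous_id.div_const _).tendsto 0
        rw [zero_div] at h1
        exact h1.mono_left nhdsWithin_le_nhds
      · filter_upwards [self_mem_nhdsWithin] with L hL
        exact div_pos_of_neg_of_neg hL hp0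
    have hexp := key c2 hc2pos _ _ hdiv
    have hhigh : Tendsto (fun L : ℝ => T * deriv f B - L) (nhdsWithin 0 (Iio 0))
        (nhds (T * deriv f B)) := by
      have h1 : Tendsto (fun L : ℝ => T * deriv f B - L) (nhds 0)
          (nhds (T * deriv f B - 0)) := (continuous_const.sub continuous_id).tendsto 0
      rw [sub_zero] at h1
      exact h1.mono_left nhdsWithin_le_nhds
    have hlow : Tendsto (fun L : ℝ => T * deriv f B - L - T * (deriv f B - deriv f Bbar) *
        Real.exp (c2 * (Real.log (L / deriv f Bbar) - Real.log T))) (nhdsWithin 0 (Iio 0))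
        (nhds (T * deriv f B)) := by
      have h2 := hexp.const_mul (T * (deriv f B - deriv f Bbar))
      rw [mul_zero] at h2
      have := hhigh.sub h2
      rw [sub_zero] at this
      exact this
    apply tendsto_of_tendsto_of_tendsto_of_le_of_le' hlow hhigh
    · filter_upwards [Ioo_mem_nhdsLT_of_mem (⟨hTp0, le_refl _⟩ : (0:ℝ) ∈ Ioc (T * deriv f Bbar) 0)] with L hL
      exact (hXb L hL).2.2.2
    · filter_upwards [Ioo_mem_nhdsLT_of_mem (⟨hTp0, le_refl _⟩ : (0:ℝ) ∈ Ioc (T * deriv f Bbar) 0)] with L hL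
      exact (hXb L hL).2.2.1
  · -- X at (T p0)+
    have hhigh : Tendsto (fun L : ℝ => deriv f B * (T - L / deriv f Bbar))
        (nhdsWithin (T * deriv f Bbar) (Ioi (T * deriv f Bbar))) (nhds 0) := by
      have h1 : Tendsto (fun L : ℝ => deriv f B * (T - L / deriv f Bbar))
          (nhds (T * deriv f Bbar))
          (nhds (deriv f B * (T - T * deriv f Bbar / deriv f Bbar))) :=
        (continuous_const.mul (continuous_const.sub (continuous_id.div_const _))).tendsto _
      rw [mul_div_assoc, div_self (ne_of_lt hp0), mul_one, sub_self, mul_zero] at h1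
      exact h1.mono_left nhdsWithin_le_nhds
    apply tendsto_of_tendsto_of_tendsto_of_le_of_le' tendsto_const_nhds hhigh
    · filter_upwards [Ioo_mem_nhdsGT_of_mem (⟨le_refl _, hTp0⟩ : T * deriv f Bbar ∈ Ico (T * deriv f Bbar) 0)] with L hL
      exact (hXb L hL).1
    · filter_upwards [Ioo_mem_nhdsGT_of_mem (⟨le_refl _, hTp0⟩ : T * deriv f Bbar ∈ Ico (T * deriv f Bbar) 0)] with L hL
      exact (hXb L hL).2.1
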